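/- Let p ≡ 5 (mod 8) be a prime, let g be a primitive element of F_p, let C_0^(4) be the subgroup of F_p^* of index 4, and let CT_p be the cyclotomic tournament with vertex set F_p and an arc from x to y if and only if x - y ∈ C_0^(4) ∪ gC_0^(4). Then the automorphism group of CT_p is exactly {σ_{a,b} : a ∈ C_0^(4), b ∈ F_p}, where σ_{a,b} is the permutation x ↦ ax + b of F_p. -/

import Mathlib

def cycC4 {F : Type*} [Monoid F] (g : F) (i : ℕ) : Set F :=
  {x | ∃ k : ℕ, x = g ^ (4 * k + i)}

open Polynomial Finset

namespace CTaux

variable {F : Type} [Field F]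

/-- The difference operator associated to a connection set `S`. -/
noncomputable def Lop (S : Finset F) (f : F → F) : F → F :=
  fun x => (∑ δ ∈ S, f (x - δ)) - (S.card : F) * f x

/-- The polynomial realizing `Lop` on polynomial functions. -/
noncomputable def Qpoly (S : Finset F) (P : F[X]) : F[X] :=
  (∑ δ ∈ S, Polynomial.taylor (-δ) P) - Polynomial.C (S.card : F) * P

lemma Lop_eval (S : Finset F) (P : F[X]) :
    Lop S (fun y => P.eval y) = fun x => (Qpoly S P).eval x := by
  funext x
  simp only [Lop, Qpoly, eval_sub, eval_finset_sum, taylor_eval, eval_mul, eval_C]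
  congr 1
  refine Finset.sum_congr rfl fun δ _ => ?_
  rw [sub_eq_add_neg]

lemma Lop_comp (S : Finset F) (σ : Equiv.Perm F)
    (hσ : ∀ x y : F, (x - y ∈ S) ↔ (σ x - σ y ∈ S)) (f : F → F) (x : F) :
    Lop S (f ∘ σ) x = Lop S f (σ x) := by
  unfold Lop
  have key : ∑ δ ∈ S, f (σ (x - δ)) = ∑ δ ∈ S, f (σ x - δ) := by
    refine Finset.sum_nbij' (fun δ => σ x - σ (x - δ)) (fun δ => x - σ.symm (σ x - δ))
      ?_ ?_ ?_ ?_ ?_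
    · intro δ hδ
      exact (hσ x (x - δ)).mp (by simpa using hδ)
    · intro δ hδ
      have := (hσ x (σ.symm (σ x - δ))).mpr (by simpa using hδ)
      simpa using this
    · intro δ hδ; simp
    · intro δ hδ; simp
    · intro δ hδ; simp
  simp only [Function.comp]
  rw [key]

lemma coeff_Qpoly (S : Finset F) (P : F[X]) (i : ℕ) :
    (Qpoly S P).coeff i = ∑ t ∈ Finset.range P.natDegree,
      (((t + 1 + i).choose i : F) * P.coeff (t + 1 + i) *
        ((-1) ^ (t + 1) * ∑ δ ∈ S, δ ^ (t + 1))) := by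
  have h1 : (Qpoly S P).coeff i
      = (∑ δ ∈ S, (Polynomial.hasseDeriv i P).eval (-δ)) - (S.card : F) * P.coeff i := by
    simp [Qpoly, Polynomial.finset_sum_coeff, Polynomial.taylor_coeff, Polynomial.coeff_C_mul]
  have h2 : ∀ δ : F, (Polynomial.hasseDeriv i P).eval (-δ)
      = ∑ t ∈ Finset.range (P.natDegree + 1),
          ((t + i).choose i : F) * P.coeff (t + i) * ((-1) ^ t * δ ^ t) := by
    intro δ
    rw [Polynomial.eval_eq_sum_range'
      (lt_of_le_of_lt (Polynomial.natDegree_hasseDeriv_le P i)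
        (by omega : P.natDegree - i < P.natDegree + 1))]
    refine Finset.sum_congr rfl fun t _ => ?_
    rw [Polynomial.hasseDeriv_coeff, neg_pow δ t]
    try push_cast
    try ring
  rw [h1]
  have h3 : (∑ δ ∈ S, (Polynomial.hasseDeriv i P).eval (-δ))
      = ∑ t ∈ Finset.range (P.natDegree + 1),
          ((t + i).choose i : F) * P.coeff (t + i) * ((-1) ^ t * ∑ δ ∈ S, δ ^ t) := by
    rw [Finset.sum_congr rfl fun δ _ => h2 δ, Finset.sum_comm]
    refine Finset.sum_congr rfl fun t _ => ?_
    try simp only [Finset.mul_sum]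
    try exact Finset.sum_congr rfl fun δ _ => by ring
  rw [h3, Finset.sum_range_succ']
  have hsum0 : ∑ δ ∈ S, (δ : F) ^ 0 = (S.card : F) := by simp
  have h4 : ((0 + i).choose i : F) * P.coeff (0 + i) * ((-1) ^ 0 * ∑ δ ∈ S, δ ^ 0) =
      (S.card : F) * P.coeff i := by
    rw [zero_add, Nat.choose_self, hsum0, Nat.cast_one, one_mul, pow_zero, one_mul, mul_comm]
  rw [h4, add_sub_cancel_right]

lemma coeff_Qpoly_eq_zero (S : Finset F) (v : ℕ)
    (hm : ∀ t, 0 < t → t < v → ∑ δ ∈ S, (δ : F) ^ t = 0)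
    (P : F[X]) (i : ℕ) (h : P.natDegree < i + v) : (Qpoly S P).coeff i = 0 := by
  rw [coeff_Qpoly]
  refine Finset.sum_eq_zero fun t _ => ?_
  rcases lt_or_ge (t + 1) v with h1 | h1
  · rw [hm (t + 1) (Nat.succ_pos t) h1]; ring
  · rw [Polynomial.coeff_eq_zero_of_natDegree_lt (by omega)]; ring

lemma natDegree_Qpoly_le (S : Finset F) (v : ℕ)
    (hm : ∀ t, 0 < t → t < v → ∑ δ ∈ S, (δ : F) ^ t = 0) (P : F[X]) :
    (Qpoly S P).natDegree ≤ P.natDegree - v := by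
  rw [Polynomial.natDegree_le_iff_coeff_eq_zero]
  intro N hN
  exact coeff_Qpoly_eq_zero S v hm P N (by omega)

lemma coeff_Qpoly_top (S : Finset F) (v : ℕ)
    (hm : ∀ t, 0 < t → t < v → ∑ δ ∈ S, (δ : F) ^ t = 0)
    (P : F[X]) (hv : 0 < v) (hle : v ≤ P.natDegree) :
    (Qpoly S P).coeff (P.natDegree - v)
      = (P.natDegree.choose v : F) * P.leadingCoeff * ((-1) ^ v * ∑ δ ∈ S, δ ^ v) := by
  rw [coeff_Qpoly]
  rw [Finset.sum_eq_single (v - 1)]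
  · have hv1 : v - 1 + 1 = v := by omega
    rw [hv1]
    have h6 : v + (P.natDegree - v) = P.natDegree := by omega
    rw [h6]
    have h7 : P.natDegree - (P.natDegree - v) = v := by omega
    have h8 : (P.natDegree.choose (P.natDegree - v) : ℕ) = P.natDegree.choose v := by
      rw [← h7, Nat.choose_symm (by omega)]
    rw [h8, Polynomial.coeff_natDegree]
  · intro t ht hne
    rcases lt_or_ge (t + 1) v with h1 | h1
    · rw [hm (t + 1) (Nat.succ_pos t) h1]; ring
    · have : P.natDegree < t + 1 + (P.natDegree - v) := by
        have : v < t + 1 := by omega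
        omega
      rw [Polynomial.coeff_eq_zero_of_natDegree_lt this]; ring
  · intro h
    exfalso
    apply h
    rw [Finset.mem_range]
    omega

lemma Qpoly_Qpoly_eq_zero (S : Finset F) (v : ℕ) (hv : 0 < v)
    (hm : ∀ t, 0 < t → t < v → ∑ δ ∈ S, (δ : F) ^ t = 0)
    (P : F[X]) (h : P.natDegree < 2 * v) :
    Qpoly S (Qpoly S P) = 0 := by
  have h1 := natDegree_Qpoly_le S v hm P
  ext i
  rw [coeff_Qpoly_eq_zero S v hm _ i (by omega), Polynomial.coeff_zero]

lemma cast_choose_ne_zero (p : ℕ) (hp : p.Prime) [CharP F p] {e t : ℕ}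
    (ht : t ≤ e) (he : e < p) : ((e.choose t : ℕ) : F) ≠ 0 := by
  rw [Ne, CharP.cast_eq_zero_iff F p]
  intro hdvd
  have h1 : p ∣ e.factorial := by
    rw [← Nat.choose_mul_factorial_mul_factorial ht]
    exact Dvd.dvd.mul_right (Dvd.dvd.mul_right hdvd _) _
  exact absurd ((Nat.Prime.dvd_factorial hp).mp h1) (by omega)

lemma Qpoly_Qpoly_ne_zero (p : ℕ) (hp : p.Prime) [CharP F p] (S : Finset F) (v : ℕ)
    (hv : 0 < v) (hm : ∀ t, 0 < t → t < v → ∑ δ ∈ S, (δ : F) ^ t = 0)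
    (hmv : (∑ δ ∈ S, (δ : F) ^ v) ≠ 0) (P : F[X]) (hP : P ≠ 0)
    (h1 : 2 * v ≤ P.natDegree) (h2 : P.natDegree < p) :
    Qpoly S (Qpoly S P) ≠ 0 ∧ (Qpoly S (Qpoly S P)).natDegree < p := by
  set e := P.natDegree with he
  have hQ1coeff : (Qpoly S P).coeff (e - v)
      = (e.choose v : F) * P.leadingCoeff * ((-1) ^ v * ∑ δ ∈ S, δ ^ v) :=
    coeff_Qpoly_top S v hm P hv (by omega)
  have hQ1ne : (Qpoly S P).coeff (e - v) ≠ 0 := by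
    rw [hQ1coeff]
    refine mul_ne_zero (mul_ne_zero (cast_choose_ne_zero p hp (by omega) h2)
      (Polynomial.leadingCoeff_ne_zero.mpr hP)) (mul_ne_zero (pow_ne_zero _ (by norm_num)) hmv)
  have hQ1deg : (Qpoly S P).natDegree = e - v :=
    le_antisymm (natDegree_Qpoly_le S v hm P) (Polynomial.le_natDegree_of_ne_zero hQ1ne)
  have hQ1nz : Qpoly S P ≠ 0 := fun h => by simp [h] at hQ1ne
  have hQ2coeff : (Qpoly S (Qpoly S P)).coeff (e - v - v)
      = ((e - v).choose v : F) * (Qpoly S P).leadingCoeff * ((-1) ^ v * ∑ δ ∈ S, δ ^ v) := by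
    have := coeff_Qpoly_top S v hm (Qpoly S P) hv (by omega)
    rwa [hQ1deg] at this
  have hQ2ne : (Qpoly S (Qpoly S P)).coeff (e - v - v) ≠ 0 := by
    rw [hQ2coeff]
    refine mul_ne_zero (mul_ne_zero (cast_choose_ne_zero p hp (by omega) (by omega))
      (Polynomial.leadingCoeff_ne_zero.mpr hQ1nz))
      (mul_ne_zero (pow_ne_zero _ (by norm_num)) hmv)
  constructor
  · exact fun h => by simp [h] at hQ2ne
  · calc (Qpoly S (Qpoly S P)).natDegree ≤ (Qpoly S P).natDegree - v :=
          natDegree_Qpoly_le S v hm _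
      _ < p := by omega

lemma exists_eval_ne [Fintype F] (P : F[X]) (hP : P ≠ 0)
    (h : P.natDegree < Fintype.card F) : ∃ x, P.eval x ≠ 0 := by
  by_contra h0
  push_neg at h0
  exact hP (Polynomial.eq_zero_of_natDegree_lt_card_of_eval_eq_zero P
    Function.injective_id h0 (by simpa))

end CTaux
theorem cyclotomic_tournament_automorphisms
    (p : ℕ) (hp : p.Prime) (hp5 : p % 8 = 5)
    (F : Type) [Field F] [Fintype F] (hF : Fintype.card F = p)
    (g : F) (hg : orderOf g = p - 1) (σ : Equiv.Perm F) :
    (∀ x y : F, (x - y ∈ cycC4 g 0 ∪ cycC4 g 1) ↔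
        (σ x - σ y ∈ cycC4 g 0 ∪ cycC4 g 1)) ↔
      ∃ a b : F, a ∈ cycC4 g 0 ∧ ∀ x : F, σ x = a * x + b := by
  classical
  have hp5' : 5 ≤ p := by omega
  set n := p / 4 with hn
  have hpn : p = 4 * n + 1 := by omega
  have hn1 : 1 ≤ n := by omega
  -- characteristic
  have hrc : ringChar F = p := by
    obtain ⟨m, hm1, hm2⟩ := FiniteField.card F (ringChar F)
    rw [hF] at hm2
    rcases (Nat.Prime.eq_one_or_self_of_dvd hp (ringChar F) (hm2 ▸ dvd_pow_self _ m.ne_zero))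
      with h | h
    · exact absurd h hm1.one_lt.ne'
    · exact h
  haveI hcharF : CharP F p := hrc ▸ ringChar.charP F
  -- powers of g
  have hg1 : g ^ (4 * n) = 1 := by
    have := pow_orderOf_eq_one g
    rw [hg] at this
    rwa [show p - 1 = 4 * n by omega] at this
  have hgord : orderOf g = 4 * n := by rw [hg]; omega
  obtain ⟨u, hu⟩ : IsUnit g := by
    refine IsUnit.of_mul_eq_one (a := g) (g ^ (4 * n - 1)) ?_
    rw [← pow_succ']
    rw [show 4 * n - 1 + 1 = 4 * n by omega]
    exact hg1
  have huord : orderOf u = 4 * n := by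
    rw [← hgord, ← hu, orderOf_units]
  have hpow : ∀ a b : ℕ, g ^ a = g ^ b ↔ a % (4 * n) = b % (4 * n) := by
    intro a b
    have hcoe : ∀ c : ℕ, g ^ c = ((u ^ c : Fˣ) : F) := by
      intro c; rw [← hu]; exact (Units.val_pow_eq_pow_val u c).symm
    rw [hcoe a, hcoe b]
    constructor
    · intro h
      have := Units.ext h
      rw [pow_eq_pow_iff_modEq, huord] at this
      exact this
    · intro h
      have : u ^ a = u ^ b := by
        rw [pow_eq_pow_iff_modEq, huord]
        exact h
      rw [this]
  -- the connection set as a finset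
  set S : Finset F :=
    ((Finset.range n).image fun k => g ^ (4 * k)) ∪
      ((Finset.range n).image fun k => g ^ (4 * k + 1)) with hSdef
  have hmemS : ∀ x : F, x ∈ S ↔ x ∈ cycC4 g 0 ∪ cycC4 g 1 := by
    intro x
    simp only [hSdef, Finset.mem_union, Finset.mem_image, Finset.mem_range, Set.mem_union,
      cycC4, Set.mem_setOf_eq]
    constructor
    · rintro (⟨k, hk, rfl⟩ | ⟨k, hk, rfl⟩)
      · exact Or.inl ⟨k, by rw [add_zero]⟩
      · exact Or.inr ⟨k, rfl⟩
    · have red : ∀ i k : ℕ, i < 4 → g ^ (4 * k + i) = g ^ (4 * (k % n) + i) := by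
        intro i k hi
        rw [hpow]
        have h1 : (4 * k) % (4 * n) = (4 * (k % n)) % (4 * n) :=
          Nat.ModEq.mul_left' 4 (Nat.mod_modEq k n).symm
        exact Nat.ModEq.add_right i h1
      rintro (⟨k, hk⟩ | ⟨k, hk⟩)
      · refine Or.inl ⟨k % n, Nat.mod_lt _ (by omega), ?_⟩
        rw [hk]
        have h := (red 0 k (by omega)).symm
        rwa [add_zero] at h
      · exact Or.inr ⟨k % n, Nat.mod_lt _ (by omega), by rw [hk]; exact (red 1 k (by omega)).symm⟩
  -- disjointness of the two cosets used in S
  have hinj0 : ∀ k ∈ Finset.range n, ∀ k' ∈ Finset.range n,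
      g ^ (4 * k) = g ^ (4 * k') → k = k' := by
    intro k hk k' hk' h
    rw [Finset.mem_range] at hk hk'
    rw [hpow] at h
    rw [Nat.mod_eq_of_lt (by omega), Nat.mod_eq_of_lt (by omega)] at h
    omega
  have hinj1 : ∀ k ∈ Finset.range n, ∀ k' ∈ Finset.range n,
      g ^ (4 * k + 1) = g ^ (4 * k' + 1) → k = k' := by
    intro k hk k' hk' h
    rw [Finset.mem_range] at hk hk'
    rw [hpow] at h
    rw [Nat.mod_eq_of_lt (by omega), Nat.mod_eq_of_lt (by omega)] at h
    omega
  have hdisj : Disjoint ((Finset.range n).image fun k => g ^ (4 * k))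
      ((Finset.range n).image fun k => g ^ (4 * k + 1)) := by
    rw [Finset.disjoint_left]
    rintro x hx hx'
    rw [Finset.mem_image] at hx hx'
    obtain ⟨k, hk, rfl⟩ := hx
    obtain ⟨k', hk', he⟩ := hx'
    rw [Finset.mem_range] at hk hk'
    rw [hpow] at he
    rw [Nat.mod_eq_of_lt (by omega), Nat.mod_eq_of_lt (by omega)] at he
    omega
  -- moments of S
  have hmom : ∀ t : ℕ, ∑ δ ∈ S, δ ^ t
      = (∑ k ∈ Finset.range n, (g ^ (4 * t)) ^ k) * (1 + g ^ t) := by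
    intro t
    rw [hSdef, Finset.sum_union hdisj, Finset.sum_image (hinj0), Finset.sum_image (hinj1)]
    have e1 : ∀ k ∈ Finset.range n, (g ^ (4 * k)) ^ t = (g ^ (4 * t)) ^ k := by
      intro k _
      rw [← pow_mul, ← pow_mul]
      exact congrArg (fun e => g ^ e) (by ring)
    have e2 : ∀ k ∈ Finset.range n, (g ^ (4 * k + 1)) ^ t = (g ^ (4 * t)) ^ k * g ^ t := by
      intro k _
      rw [← pow_mul, ← pow_mul, ← pow_add]
      exact congrArg (fun e => g ^ e) (by ring)
    rw [Finset.sum_congr rfl e1, Finset.sum_congr rfl e2, ← Finset.sum_mul]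
    ring
  have hmom_lt : ∀ t : ℕ, 0 < t → t < n → ∑ δ ∈ S, (δ : F) ^ t = 0 := by
    intro t ht1 ht2
    rw [hmom]
    have hu4 : g ^ (4 * t) ≠ 1 := by
      intro h
      rw [show (1 : F) = g ^ 0 by rw [pow_zero], hpow] at h
      rw [Nat.mod_eq_of_lt (by omega), Nat.zero_mod] at h
      omega
    have hgeom : (∑ k ∈ Finset.range n, (g ^ (4 * t)) ^ k) * (g ^ (4 * t) - 1)
        = (g ^ (4 * t)) ^ n - 1 := geom_sum_mul _ _
    have hgn : (g ^ (4 * t)) ^ n = 1 := by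
      rw [← pow_mul, show 4 * t * n = 4 * n * t by ring, pow_mul, hg1, one_pow]
    rw [hgn, sub_self] at hgeom
    rcases mul_eq_zero.mp hgeom with h | h
    · rw [h, zero_mul]
    · exact absurd (by rwa [sub_eq_zero] at h) hu4
  have hmom_n : (∑ δ ∈ S, (δ : F) ^ n) ≠ 0 := by
    rw [hmom]
    have h1 : ∀ k ∈ Finset.range n, (g ^ (4 * n)) ^ k = 1 := by
      intro k _
      rw [hg1, one_pow]
    rw [Finset.sum_congr rfl h1, Finset.sum_const, Finset.card_range, nsmul_eq_mul, mul_one]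
    refine mul_ne_zero ?_ ?_
    · rw [Ne, CharP.cast_eq_zero_iff F p]
      intro h
      have := Nat.le_of_dvd (by omega) h
      omega
    · intro h
      have hgn : g ^ n = -1 := by rwa [add_comm, add_eq_zero_iff_eq_neg] at h
      have h2 : g ^ (n * 2) = 1 := by
        rw [pow_mul, hgn]
        norm_num
      rw [show (1 : F) = g ^ 0 by rw [pow_zero], hpow] at h2
      rw [Nat.mod_eq_of_lt (by omega), Nat.zero_mod] at h2
      omega
  -- coset multiplication lemmas
  have hmulC : ∀ (c z : F) (i : ℕ), c ∈ cycC4 g 0 → z ∈ cycC4 g i → c * z ∈ cycC4 g i := by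
    rintro c z i ⟨k1, rfl⟩ ⟨k2, rfl⟩
    exact ⟨k1 + k2, by rw [← pow_add]; exact congrArg (fun e => g ^ e) (by ring)⟩
  have hinv : ∀ c : F, c ∈ cycC4 g 0 → ∃ c', c' ∈ cycC4 g 0 ∧ c' * c = 1 := by
    rintro c ⟨k, rfl⟩
    obtain ⟨q, r, hr, rfl⟩ : ∃ q r, r < n ∧ k = n * q + r :=
      ⟨k / n, k % n, Nat.mod_lt _ (by omega), (Nat.div_add_mod k n).symm⟩
    refine ⟨g ^ (4 * (n - r) + 0), ⟨n - r, rfl⟩, ?_⟩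
    rw [← pow_add]
    have hexp : 4 * (n - r) + 0 + (4 * (n * q + r) + 0) = (4 * n) * (q + 1) := by
      zify [Nat.le_of_lt hr]
      ring
    rw [hexp, pow_mul, hg1, one_pow]
  constructor
  · -- forward (hard) direction
    intro Hσ
    have hSσ : ∀ x y : F, (x - y ∈ S) ↔ (σ x - σ y ∈ S) := by
      intro x y
      rw [hmemS, hmemS]
      exact Hσ x y
    have hLcomp := CTaux.Lop_comp S σ hSσ
    have hLL : ∀ (f : F → F) (x : F), CTaux.Lop S (CTaux.Lop S (f ∘ ⇑σ)) x
        = CTaux.Lop S (CTaux.Lop S f) (σ x) := by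
      intro f x
      have h1 : CTaux.Lop S (f ∘ ⇑σ) = (CTaux.Lop S f) ∘ ⇑σ := funext fun y => hLcomp f y
      rw [h1]
      exact hLcomp (CTaux.Lop S f) x
    have hkill : ∀ R : Polynomial F, R.natDegree < 2 * n →
        CTaux.Lop S (CTaux.Lop S (fun y => R.eval y)) = fun _ => (0 : F) := by
      intro R hR
      rw [CTaux.Lop_eval S R, CTaux.Lop_eval S (CTaux.Qpoly S R),
        CTaux.Qpoly_Qpoly_eq_zero S n (by omega) hmom_lt R hR]
      funext x
      simp
    have hid : Set.InjOn (id : F → F) ↑(Finset.univ : Finset F) := Function.injective_id.injOn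
    set P : Polynomial F := Lagrange.interpolate Finset.univ id (⇑σ) with hPdef
    have hPeval : ∀ x : F, P.eval x = σ x := by
      intro x
      have := Lagrange.eval_interpolate_at_node (⇑σ) hid (Finset.mem_univ x)
      simpa [hPdef] using this
    have hσP : ⇑σ = fun y => P.eval y := funext fun x => (hPeval x).symm
    have hPdeg : P.natDegree < p := by
      have hlt : P.degree < (Fintype.card F : ℕ) := by
        have := Lagrange.degree_interpolate_lt (r := ⇑σ) hid
        rwa [Finset.card_univ] at this
      rw [hF] at hlt
      rcases eq_or_ne P 0 with h | h
      · rw [h]; simpa using hp.pos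
      · exact (Polynomial.natDegree_lt_iff_degree_lt h).mpr (by exact_mod_cast hlt)
    have hL2σ : CTaux.Lop S (CTaux.Lop S ⇑σ) = fun _ => (0 : F) := by
      have hXd : (Polynomial.X : Polynomial F).natDegree < 2 * n := by
        rw [Polynomial.natDegree_X]; omega
      have h1 : ⇑σ = (fun y => (Polynomial.X : Polynomial F).eval y) ∘ ⇑σ := by
        funext x; simp
      rw [h1]
      funext x
      rw [hLL _ x, hkill Polynomial.X hXd]
    have hL2P : CTaux.Lop S (CTaux.Lop S (fun y => P.eval y)) = fun _ => (0 : F) := by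
      rw [← hσP]; exact hL2σ
    have hPdeg2 : P.natDegree < 2 * n := by
      by_contra hcon
      push_neg at hcon
      have hPne : P ≠ 0 := by
        intro h0
        have h1 : P.natDegree = 0 := by rw [h0]; simp
        omega
      obtain ⟨hQ2ne, hQ2deg⟩ := CTaux.Qpoly_Qpoly_ne_zero p hp S n (by omega) hmom_lt
        hmom_n P hPne (by omega) hPdeg
      obtain ⟨x, hx⟩ := CTaux.exists_eval_ne _ hQ2ne (by rw [hF]; exact hQ2deg)
      refine hx ?_
      have h2 : CTaux.Lop S (CTaux.Lop S (fun y => P.eval y))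
          = fun x => (CTaux.Qpoly S (CTaux.Qpoly S P)).eval x := by
        rw [CTaux.Lop_eval S P, CTaux.Lop_eval S (CTaux.Qpoly S P)]
      have h4 := congrFun (h2.symm.trans hL2P) x
      simpa using h4
    by_cases hdeg1 : P.natDegree ≤ 1
    · -- σ is affine
      have hPC := Polynomial.eq_X_add_C_of_natDegree_le_one hdeg1
      have hab : ∀ x : F, σ x = P.coeff 1 * x + P.coeff 0 := by
        intro x
        rw [← hPeval x]
        conv_lhs => rw [hPC]
        simp
      have haz : ∀ z : F, z ∈ cycC4 g 0 ∪ cycC4 g 1 ↔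
          P.coeff 1 * z ∈ cycC4 g 0 ∪ cycC4 g 1 := by
        intro z
        have h5 := Hσ z 0
        rw [sub_zero] at h5
        have h6 : σ z - σ 0 = P.coeff 1 * z := by rw [hab, hab]; ring
        rwa [h6] at h5
      have h1S : (1 : F) ∈ cycC4 g 0 ∪ cycC4 g 1 := Or.inl ⟨0, by simp⟩
      have ha : P.coeff 1 ∈ cycC4 g 0 ∪ cycC4 g 1 := by
        have := (haz 1).mp h1S
        rwa [mul_one] at this
      rcases ha with haC | haC
      · exact ⟨P.coeff 1, P.coeff 0, haC, hab⟩
      · exfalso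
        obtain ⟨k, hk⟩ := haC
        have hgS : g ∈ cycC4 g 0 ∪ cycC4 g 1 := Or.inr ⟨0, by simp⟩
        have hag := (haz g).mp hgS
        have h3 : P.coeff 1 * g = g ^ (4 * k + 2) := by
          rw [hk, ← pow_succ]
        rcases hag with ⟨k', hk'⟩ | ⟨k', hk'⟩
        · rw [h3] at hk'
          rw [hpow] at hk'
          have h5 : (4 * k + 2) % 4 = (4 * k' + 0) % 4 := Nat.ModEq.of_mul_right n hk'
          omega
        · rw [h3] at hk'
          rw [hpow] at hk'
          have h5 : (4 * k + 2) % 4 = (4 * k' + 1) % 4 := Nat.ModEq.of_mul_right n hk'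
          omega
    · -- bootstrap: degree between 2 and 2n-1 is impossible
      exfalso
      have he2 : 2 ≤ P.natDegree := by omega
      set j := (2 * n - 1) / P.natDegree + 1 with hjdef
      have hPne : P ≠ 0 := by
        intro h0
        have h1 : P.natDegree = 0 := by rw [h0]; simp
        omega
      have hatom : P.natDegree * ((2 * n - 1) / P.natDegree) +
          (2 * n - 1) % P.natDegree = 2 * n - 1 := Nat.div_add_mod _ _
      have hmodlt : (2 * n - 1) % P.natDegree < P.natDegree := Nat.mod_lt _ (by omega)
      have hje3 : j * P.natDegree
          = P.natDegree * ((2 * n - 1) / P.natDegree) + P.natDegree := by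
        rw [hjdef]; ring
      have hje1 : 2 * n ≤ j * P.natDegree := by omega
      have hje2 : j * P.natDegree ≤ 4 * n - 2 := by omega
      have hjle : j ≤ 2 * n - 1 := by
        have h5 : (2 * n - 1) / P.natDegree ≤ (2 * n - 1) / 2 :=
          Nat.div_le_div_left he2 (by omega)
        have h6 : (2 * n - 1) / 2 < 2 * n - 1 := Nat.div_lt_self (by omega) (by omega)
        omega
      have hPj : (P ^ j).natDegree = j * P.natDegree := Polynomial.natDegree_pow P j
      obtain ⟨hQ2ne, hQ2deg⟩ := CTaux.Qpoly_Qpoly_ne_zero p hp S n (by omega) hmom_lt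
        hmom_n (P ^ j) (pow_ne_zero j hPne) (by rw [hPj]; omega) (by rw [hPj]; omega)
      obtain ⟨x, hx⟩ := CTaux.exists_eval_ne _ hQ2ne (by rw [hF]; exact hQ2deg)
      refine hx ?_
      have hfun : (fun y => (P ^ j).eval y)
          = (fun y => ((Polynomial.X : Polynomial F) ^ j).eval y) ∘ ⇑σ := by
        funext y
        simp [Polynomial.eval_pow, hPeval]
      have hXj : ((Polynomial.X : Polynomial F) ^ j).natDegree < 2 * n := by
        rw [Polynomial.natDegree_X_pow]; omega
      have h2 : CTaux.Lop S (CTaux.Lop S (fun y => (P ^ j).eval y))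
          = fun x => (CTaux.Qpoly S (CTaux.Qpoly S (P ^ j))).eval x := by
        rw [CTaux.Lop_eval S (P ^ j), CTaux.Lop_eval S (CTaux.Qpoly S (P ^ j))]
      have h3 : CTaux.Lop S (CTaux.Lop S (fun y => (P ^ j).eval y)) = fun _ => (0 : F) := by
        rw [hfun]
        funext z
        rw [hLL _ z, hkill _ hXj]
      have h4 := congrFun (h2.symm.trans h3) x
      simpa using h4
  · -- converse (easy) direction
    rintro ⟨a, b, haC, hab⟩ x y
    have hxy : σ x - σ y = a * (x - y) := by rw [hab, hab]; ring
    rw [hxy]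
    have key : ∀ z : F, z ∈ cycC4 g 0 ∪ cycC4 g 1 ↔ a * z ∈ cycC4 g 0 ∪ cycC4 g 1 := by
      intro z
      constructor
      · rintro (h | h)
        · exact Or.inl (hmulC a z 0 haC h)
        · exact Or.inr (hmulC a z 1 haC h)
      · obtain ⟨a', ha'C, ha'a⟩ := hinv a haC
        have hz : z = a' * (a * z) := by rw [← mul_assoc, ha'a, one_mul]
        rintro (h | h)
        · rw [hz]; exact Or.inl (hmulC a' _ 0 ha'C h)
        · rw [hz]; exact Or.inr (hmulC a' _ 1 ha'C h)
    exact key (x - y)
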